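/- For all real numbers 0 < m ≤ M < ∞ and all γ ≥ 2, there exists a constant C ≥ 0 such that for all a with m ≤ a ≤ M and all b ≥ -a, one has (γ-1)·a^(γ-2)·b² ≤ (a+b)^γ - a^γ - γ·a^(γ-1)·b ≤ C·(1 + |b|^(γ-2))·b². -/

import Mathlib

open Real

/-- For all real numbers `0 < m ≤ M` and all `γ ≥ 2`, there exists `C ≥ 0` such that
for all `a` with `m ≤ a ≤ M` and all `b ≥ -a`,
`(γ-1)·a^(γ-2)·b² ≤ (a+b)^γ - a^γ - γ·a^(γ-1)·b ≤ C·(1 + |b|^(γ-2))·b²`. -/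
theorem stmt0 (m M γ : ℝ) (hm : 0 < m) (hmM : m ≤ M) (hγ : 2 ≤ γ) :
    ∃ C : ℝ, 0 ≤ C ∧ ∀ a b : ℝ, m ≤ a → a ≤ M → -a ≤ b →
      (γ - 1) * a ^ (γ - 2) * b ^ 2 ≤ (a + b) ^ γ - a ^ γ - γ * a ^ (γ - 1) * b ∧
      (a + b) ^ γ - a ^ γ - γ * a ^ (γ - 1) * b ≤ C * (1 + |b| ^ (γ - 2)) * b ^ 2 := by
  have hM0 : 0 < M := lt_of_lt_of_le hm hmM
  have hγ0 : (0:ℝ) < γ := by linarith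
  have hγ2 : (0:ℝ) ≤ γ - 2 := by linarith
  set K0 : ℝ := (2:ℝ) ^ (γ - 2) * max 1 (M ^ (γ - 2)) with hK0def
  have hK0 : 0 < K0 := by
    apply mul_pos (Real.rpow_pos_of_pos (by norm_num) _)
    exact lt_of_lt_of_le one_pos (le_max_left _ _)
  have hγγ : (0:ℝ) ≤ γ * (γ - 1) := by nlinarith
  refine ⟨γ * (γ - 1) / 2 * K0, by nlinarith [hK0.le], ?_⟩
  intro a b ha haM hb
  have ha0 : 0 < a := lt_of_lt_of_le hm ha
  have hab : 0 ≤ a + b := by linarith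
  -- the integrand of the Taylor remainder
  set g : ℝ → ℝ := fun t => (1 - t) * (γ * (γ - 1) * (a + t * b) ^ (γ - 2) * b ^ 2) with hgdef
  have hcont : Continuous fun t : ℝ => (a + t * b) ^ (γ - 2) := by
    apply Continuous.rpow_const (by continuity)
    intro t; right; linarith
  have hgcont : Continuous g := by
    apply Continuous.mul (by continuity)
    exact ((continuous_const.mul hcont).mul continuous_const)
  -- Taylor remainder identity
  have key : (∫ t in (0:ℝ)..1, g t)
      = (a + b) ^ γ - a ^ γ - γ * a ^ (γ - 1) * b := by
    have hderiv : ∀ t : ℝ, HasDerivAt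
        (fun t => (a + t * b) ^ γ + (1 - t) * (γ * (a + t * b) ^ (γ - 1) * b)) (g t) t := by
      intro t
      have hu : HasDerivAt (fun t : ℝ => a + t * b) b t := by
        simpa using ((hasDerivAt_id t).mul_const b).const_add a
      have h1 : HasDerivAt (fun t : ℝ => (a + t * b) ^ γ) (b * γ * (a + t * b) ^ (γ - 1)) t :=
        hu.rpow_const (Or.inr (by linarith))
      have h2 : HasDerivAt (fun t : ℝ => (a + t * b) ^ (γ - 1))
          (b * (γ - 1) * (a + t * b) ^ (γ - 2)) t := by
        have h := hu.rpow_const (p := γ - 1) (Or.inr (by linarith))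
        rw [show γ - 1 - 1 = γ - 2 by ring] at h
        exact h
      have h3 : HasDerivAt (fun t : ℝ => (1 - t)) (-1) t := by
        simpa using (hasDerivAt_id t).const_sub 1
      have h4 : HasDerivAt (fun t : ℝ => γ * (a + t * b) ^ (γ - 1) * b)
          (γ * (b * (γ - 1) * (a + t * b) ^ (γ - 2)) * b) t :=
        (h2.const_mul γ).mul_const b
      have h5 := h1.add (h3.mul h4)
      convert h5 using 1
      · rfl
      · rfl
      · rfl
      simp only [hgdef]
      ring
    rw [intervalIntegral.integral_eq_sub_of_hasDerivAt (fun t _ => hderiv t)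
      (hgcont.intervalIntegrable 0 1)]
    norm_num
    ring
  constructor
  · -- lower bound
    have hJ : (∫ t in (0:ℝ)..1, (1 - t) ^ (γ - 1)) = 1 / γ := by
      rw [intervalIntegral.integral_comp_sub_left (fun s => s ^ (γ - 1)) 1]
      norm_num
      rw [integral_rpow (Or.inl (by linarith))]
      rw [show γ - 1 + 1 = γ by ring]
      rw [Real.one_rpow, Real.zero_rpow (by positivity : γ ≠ 0)]
      norm_num
    have hmono : ∀ t ∈ Set.Icc (0:ℝ) 1,
        γ * ((γ - 1) * a ^ (γ - 2) * b ^ 2) * (1 - t) ^ (γ - 1) ≤ g t := by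
      intro t ht
      obtain ⟨ht0, ht1⟩ := ht
      have h1t : (0:ℝ) ≤ 1 - t := by linarith
      have hge : (1 - t) * a ≤ a + t * b := by nlinarith
      have hr : ((1 - t) * a) ^ (γ - 2) ≤ (a + t * b) ^ (γ - 2) :=
        Real.rpow_le_rpow (by positivity) hge hγ2
      rw [Real.mul_rpow h1t ha0.le] at hr
      have hsplit : (1 - t) ^ (γ - 1) = (1 - t) * (1 - t) ^ (γ - 2) := by
        rw [show γ - 1 = 1 + (γ - 2) by ring, Real.rpow_add' h1t (by intro h; nlinarith),
          Real.rpow_one]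
      have hc : (0:ℝ) ≤ (1 - t) * (γ * (γ - 1) * b ^ 2) :=
        mul_nonneg h1t (mul_nonneg hγγ (sq_nonneg b))
      simp only [hgdef]
      calc γ * ((γ - 1) * a ^ (γ - 2) * b ^ 2) * (1 - t) ^ (γ - 1)
          = ((1 - t) * (γ * (γ - 1) * b ^ 2)) * ((1 - t) ^ (γ - 2) * a ^ (γ - 2)) := by
            rw [hsplit]; ring
        _ ≤ ((1 - t) * (γ * (γ - 1) * b ^ 2)) * (a + t * b) ^ (γ - 2) :=
            mul_le_mul_of_nonneg_left hr hc
        _ = (1 - t) * (γ * (γ - 1) * (a + t * b) ^ (γ - 2) * b ^ 2) := by ring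
    have hcont2 : Continuous fun t : ℝ =>
        γ * ((γ - 1) * a ^ (γ - 2) * b ^ 2) * (1 - t) ^ (γ - 1) := by
      apply Continuous.mul continuous_const
      apply Continuous.rpow_const (by continuity)
      intro t; right; linarith
    calc (γ - 1) * a ^ (γ - 2) * b ^ 2
        = ∫ t in (0:ℝ)..1, γ * ((γ - 1) * a ^ (γ - 2) * b ^ 2) * (1 - t) ^ (γ - 1) := by
          rw [intervalIntegral.integral_const_mul, hJ]
          field_simp
      _ ≤ ∫ t in (0:ℝ)..1, g t :=
          intervalIntegral.integral_mono_on (by norm_num)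
            (hcont2.intervalIntegrable 0 1) (hgcont.intervalIntegrable 0 1) hmono
      _ = _ := key
  · -- upper bound
    have habs : (0:ℝ) ≤ |b| ^ (γ - 2) := Real.rpow_nonneg (abs_nonneg b) _
    set D : ℝ := γ * (γ - 1) * (K0 * (1 + |b| ^ (γ - 2))) * b ^ 2 with hDdef
    have hKbound : ∀ t ∈ Set.Icc (0:ℝ) 1,
        (a + t * b) ^ (γ - 2) ≤ K0 * (1 + |b| ^ (γ - 2)) := by
      intro t ht
      obtain ⟨ht0, ht1⟩ := ht
      have hge : (1 - t) * a ≤ a + t * b := by nlinarith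
      have hpos : (0:ℝ) ≤ a + t * b := le_trans (by nlinarith) hge
      have h1 : a + t * b ≤ M + |b| := by
        have htb : t * b ≤ |b| := by
          calc t * b ≤ |t * b| := le_abs_self _
            _ = t * |b| := by rw [abs_mul, abs_of_nonneg ht0]
            _ ≤ 1 * |b| := mul_le_mul_of_nonneg_right ht1 (abs_nonneg b)
            _ = |b| := one_mul _
        linarith
      have h3 : M + |b| ≤ 2 * max M |b| := by
        have := le_max_left M |b|; have := le_max_right M |b|; linarith
      have h6 : (max M |b|) ^ (γ - 2) ≤ M ^ (γ - 2) + |b| ^ (γ - 2) := by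
        rcases le_total M |b| with h | h
        · rw [max_eq_right h]
          have : (0:ℝ) ≤ M ^ (γ - 2) := Real.rpow_nonneg hM0.le _
          linarith
        · rw [max_eq_left h]
          linarith
      have h7 : M ^ (γ - 2) + |b| ^ (γ - 2) ≤ max 1 (M ^ (γ - 2)) * (1 + |b| ^ (γ - 2)) := by
        have a1 : M ^ (γ - 2) ≤ max 1 (M ^ (γ - 2)) := le_max_right _ _
        have a2 : (1:ℝ) ≤ max 1 (M ^ (γ - 2)) := le_max_left _ _
        nlinarith
      calc (a + t * b) ^ (γ - 2)
          ≤ (M + |b|) ^ (γ - 2) := Real.rpow_le_rpow hpos h1 hγ2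
        _ ≤ (2 * max M |b|) ^ (γ - 2) :=
            Real.rpow_le_rpow (by positivity) h3 hγ2
        _ = 2 ^ (γ - 2) * (max M |b|) ^ (γ - 2) :=
            Real.mul_rpow (by norm_num) (le_max_of_le_left hM0.le)
        _ ≤ 2 ^ (γ - 2) * (M ^ (γ - 2) + |b| ^ (γ - 2)) := by
            have h2p : (0:ℝ) ≤ (2:ℝ) ^ (γ - 2) := Real.rpow_nonneg (by norm_num) _
            exact mul_le_mul_of_nonneg_left h6 h2p
        _ ≤ 2 ^ (γ - 2) * (max 1 (M ^ (γ - 2)) * (1 + |b| ^ (γ - 2))) := by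
            have h2p : (0:ℝ) ≤ (2:ℝ) ^ (γ - 2) := Real.rpow_nonneg (by norm_num) _
            exact mul_le_mul_of_nonneg_left h7 h2p
        _ = K0 * (1 + |b| ^ (γ - 2)) := by rw [hK0def]; ring
    have hmono : ∀ t ∈ Set.Icc (0:ℝ) 1, g t ≤ (1 - t) * D := by
      intro t ht
      obtain ⟨ht0, ht1⟩ := ht
      have h1t : (0:ℝ) ≤ 1 - t := by linarith
      simp only [hgdef, hDdef]
      exact mul_le_mul_of_nonneg_left
        (mul_le_mul_of_nonneg_right
          (mul_le_mul_of_nonneg_left (hKbound t ⟨ht0, ht1⟩) hγγ) (sq_nonneg b)) h1t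
    have hI : (∫ t in (0:ℝ)..1, (1 - t) * D) = D / 2 := by
      rw [intervalIntegral.integral_mul_const]
      norm_num [intervalIntegral.integral_sub intervalIntegrable_const
        intervalIntegral.intervalIntegrable_id, integral_id]
      ring
    calc (a + b) ^ γ - a ^ γ - γ * a ^ (γ - 1) * b
        = ∫ t in (0:ℝ)..1, g t := key.symm
      _ ≤ ∫ t in (0:ℝ)..1, (1 - t) * D :=
          intervalIntegral.integral_mono_on (by norm_num)
            (hgcont.intervalIntegrable 0 1)
            (((continuous_const.sub continuous_id).mul continuous_const).intervalIntegrable 0 1)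
            hmono
      _ = D / 2 := hI
      _ = γ * (γ - 1) / 2 * K0 * (1 + |b| ^ (γ - 2)) * b ^ 2 := by rw [hDdef]; ring
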